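/- arXiv:2403.12579 — 2 statements merged into one kernel-verified Lean document; each statement's English description precedes it below -/
import Mathlib

section
/- Let β = (βx, βy) ∈ (0,∞)² and assume dom f* is nonempty and closed. Then for every z = (x,y) ∈ X × Y with f(x) < +∞, with a = Proj_{dom f*}(−Aᵀy), the quantity f(x) + f*(a) + ⟨b, y⟩ satisfies the lower bound f(x) + f*(a) + ⟨b, y⟩ ≥ −( √(2βx)‖x‖ + √(2βy)‖y‖ ) √(G_β(z)). -/
open scoped RealInnerProductSpace
open Filter Topology Metric

noncomputable section

variable {X Y : Type*} [NormedAddCommGroup X] [InnerProductSpace ℝ X]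
  [NormedAddCommGroup Y] [InnerProductSpace ℝ Y]

/-- The Lagrangian `L(x, y) = f(x) + ⟪A x − b, y⟫`. -/
def Lag (f : X → EReal) (A : X →L[ℝ] Y) (b : Y) (x : X) (y : Y) : EReal :=
  f x + ((⟪A x - b, y⟫ : ℝ) : EReal)

/-- The smoothed duality gap `G_β((x, y); (xd, yd))`, valued in `ℝ ∪ {+∞}` (here `EReal`;
the inner expression is `−∞` exactly when `f x' = +∞`, so such `x'` do not contribute). -/
def smoothedGap (f : X → EReal) (A : X →L[ℝ] Y) (b : Y) (βx βy : ℝ)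
    (x : X) (y : Y) (xd : X) (yd : Y) : EReal :=
  ⨆ w : X × Y,
    (Lag f A b x w.2 - Lag f A b w.1 y
      - ((βx / 2 * ‖w.1 - xd‖ ^ 2 + βy / 2 * ‖w.2 - yd‖ ^ 2 : ℝ) : EReal))

/-- `f` is proper: never `−∞` and not identically `+∞`. -/
def EProper (f : X → EReal) : Prop := (∀ u, f u ≠ ⊥) ∧ ∃ u, f u ≠ ⊤

/-- Convexity for an `EReal`-valued function. -/
def EConvexOn (f : X → EReal) : Prop :=
  ∀ u v : X, ∀ t : ℝ, 0 ≤ t → t ≤ 1 →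
    f (t • u + (1 - t) • v) ≤ (t : EReal) * f u + ((1 - t : ℝ) : EReal) * f v

/-- The subdifferential `∂f(x) = {q | ∀ u, f(u) ≥ f(x) + ⟪q, u − x⟫}`. -/
def ESubdiff (f : X → EReal) (x : X) : Set X :=
  {q | ∀ u : X, f x + ((⟪q, u - x⟫ : ℝ) : EReal) ≤ f u}

/-- `p = Prox_{s f}(v)`: `p` is the (unique) minimizer of `f(·) + (1/(2s))‖· − v‖²`. -/
def IsProx (f : X → EReal) (s : ℝ) (v p : X) : Prop :=
  ∀ u : X, f p + ((1 / (2 * s) * ‖p - v‖ ^ 2 : ℝ) : EReal)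
    ≤ f u + ((1 / (2 * s) * ‖u - v‖ ^ 2 : ℝ) : EReal)

/-- The Fenchel–Legendre conjugate `f*(φ) = sup_u (⟪φ, u⟫ − f(u))`. -/
def fenchel (f : X → EReal) (φ : X) : EReal := ⨆ u : X, (((⟪φ, u⟫ : ℝ) : EReal) - f u)

/-- The domain of the Fenchel conjugate. -/
def fdom (f : X → EReal) : Set X := {φ | fenchel f φ ≠ ⊤}

/-- `a = Proj_S(v)`: `a` is the (unique, for `S` closed convex nonempty) Euclidean
projection of `v` onto `S`. -/
def IsProj (S : Set X) (v a : X) : Prop := a ∈ S ∧ ∀ u ∈ S, ‖a - v‖ ≤ ‖u - v‖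

/-- `(xs, ys)` is a saddle point of the Lagrangian. -/
def IsSaddle (f : X → EReal) (A : X →L[ℝ] Y) (b : Y) (xs : X) (ys : Y) : Prop :=
  ∀ (x' : X) (y' : Y), Lag f A b xs y' ≤ Lag f A b xs ys ∧ Lag f A b xs ys ≤ Lag f A b x' ys

/-- The set of saddle points `Z⋆`. -/
def saddleSet (f : X → EReal) (A : X →L[ℝ] Y) (b : Y) : Set (X × Y) :=
  {zs | IsSaddle f A b zs.1 zs.2}

/-- Euclidean distance from a point of `X × Y` to a set. -/
def distZ (z : X × Y) (S : Set (X × Y)) : ℝ :=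
  ⨅ w : S, Real.sqrt (‖z.1 - (w : X × Y).1‖ ^ 2 + ‖z.2 - (w : X × Y).2‖ ^ 2)

/-- The projected duality gap `D(z)`, where `fx = f(x)` and `fa = f*(a)` (both finite). -/
def PDG (fx fa : ℝ) (A : X →L[ℝ] Y) (At : Y →L[ℝ] X) (b : Y) (a x : X) (y : Y) : ℝ :=
  |fx + fa + ⟪b, y⟫| ^ 2 + ‖a + At y‖ ^ 2 + ‖A x - b‖ ^ 2

section Aux
open Set

lemma lsc_exists_min {α : Type*} [TopologicalSpace α] [T2Space α]
    {S : Set α} (hS : IsCompact S) (hne : S.Nonempty) {F : α → EReal}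
    (hF : LowerSemicontinuous F) : ∃ p ∈ S, ∀ u ∈ S, F p ≤ F u := by
  have hclosed : ∀ c : EReal, IsClosed (F ⁻¹' Iic c) :=
    lowerSemicontinuous_iff_isClosed_preimage.1 hF
  haveI : Nonempty S := hne.to_subtype
  set T : S → Set α := fun u => S ∩ F ⁻¹' Iic (F u) with hT
  have h := IsCompact.nonempty_iInter_of_directed_nonempty_isCompact_isClosed T
    (fun u v => by
      rcases le_total (F (u : α)) (F (v : α)) with h | h
      · exact ⟨u, Subset.rfl, inter_subset_inter_right _ (preimage_mono (Iic_subset_Iic.2 h))⟩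
      · exact ⟨v, inter_subset_inter_right _ (preimage_mono (Iic_subset_Iic.2 h)), Subset.rfl⟩)
    (fun u => ⟨u, u.2, mem_preimage.2 (mem_Iic.2 le_rfl)⟩)
    (fun u => hS.of_isClosed_subset (hS.isClosed.inter (hclosed _)) inter_subset_left)
    (fun u => hS.isClosed.inter (hclosed _))
  obtain ⟨p, hp⟩ := h
  simp only [mem_iInter] at hp
  refine ⟨p, (hp ⟨_, hne.some_mem⟩).1, fun u hu => (hp ⟨u, hu⟩).2⟩

lemma exists_prox_subgrad {X : Type*} [NormedAddCommGroup X] [InnerProductSpace ℝ X]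
    [FiniteDimensional ℝ X]
    (f : X → EReal) (hbot : ∀ u, f u ≠ ⊥) (hf_lsc : LowerSemicontinuous f)
    (hf_conv : EConvexOn f)
    (β : ℝ) (hβ : 0 < β) (φ x : X) (fx : ℝ) (hfx : f x = (fx : EReal))
    (ψ1 : X) (c1 : ℝ) (hmin : ∀ u, ((⟪ψ1, u⟫ - c1 : ℝ) : EReal) ≤ f u) :
    ∃ p : X, ∃ fp : ℝ, f p = (fp : EReal) ∧
      ∀ u : X, (fp : EReal) + ((⟪φ - β • (p - x), u - p⟫ : ℝ) : EReal) ≤ f u := by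
  classical
  set q : X → ℝ := fun u => β / 2 * ‖u - x‖ ^ 2 - ⟪φ, u - x⟫ with hq_def
  have hq_cont : Continuous q := by
    apply Continuous.sub
    · exact continuous_const.mul ((continuous_id.sub continuous_const).norm.pow 2)
    · exact continuous_const.inner (continuous_id.sub continuous_const)
  set F : X → EReal := fun u => f u + ((q u : ℝ) : EReal) with hF_def
  have hF_lsc : LowerSemicontinuous F := by
    apply hf_lsc.add' ((continuous_coe_real_ereal.comp hq_cont).lowerSemicontinuous)
    intro u
    exact EReal.continuousAt_add (Or.inr (by simp)) (Or.inl (hbot u))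
  have hqx : q x = 0 := by simp [hq_def]
  have hFx : F x = (fx : EReal) := by
    simp [hF_def, hfx, hqx, ← EReal.coe_add]
  set S : Set X := F ⁻¹' Iic ((fx : EReal)) with hS_def
  have hxS : x ∈ S := by simp [hS_def, hFx]
  -- every element of S has finite f-value, and S is bounded
  have hfin : ∀ u ∈ S, f u ≠ ⊤ := by
    intro u hu hutop
    have htop : F u = ⊤ := by
      simp only [hF_def, hutop]
      exact EReal.top_add_of_ne_bot (by simp)
    have hle : F u ≤ (fx : EReal) := hu
    rw [htop] at hle
    exact absurd hle (by simp)
  -- real value of f on S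
  set K : ℝ := ‖ψ1‖ + ‖φ‖ with hK_def
  set C : ℝ := |fx + c1 - ⟪ψ1, x⟫| with hC_def
  set R : ℝ := Real.sqrt (4 * (β * C + K ^ 2)) / β with hR_def
  have hSball : S ⊆ closedBall x R := by
    intro u hu
    have hfu_ne_top := hfin u hu
    set fu : ℝ := (f u).toReal with hfu_def
    have hfu : f u = (fu : EReal) := (EReal.coe_toReal hfu_ne_top (hbot u)).symm
    have hle : F u ≤ (fx : EReal) := hu
    have hle' : ((fu + q u : ℝ) : EReal) ≤ ((fx : ℝ) : EReal) := by
      rw [EReal.coe_add, ← hfu]; exact hle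
    have h1 : fu + q u ≤ fx := EReal.coe_le_coe_iff.1 hle'
    have h2 : ⟪ψ1, u⟫ - c1 ≤ fu := by
      have := hmin u; rw [hfu] at this; exact EReal.coe_le_coe_iff.1 this
    set d : ℝ := ‖u - x‖ with hd_def
    have hd0 : 0 ≤ d := norm_nonneg _
    have h3 : |⟪ψ1, u - x⟫| ≤ ‖ψ1‖ * d := abs_real_inner_le_norm _ _
    have h4 : |⟪φ, u - x⟫| ≤ ‖φ‖ * d := abs_real_inner_le_norm _ _
    have h5 : ⟪ψ1, u - x⟫ = ⟪ψ1, u⟫ - ⟪ψ1, x⟫ := inner_sub_right _ _ _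
    have hCge : fx + c1 - ⟪ψ1, x⟫ ≤ C := le_abs_self _
    have hq_eq : q u = β / 2 * d ^ 2 - ⟪φ, u - x⟫ := rfl
    have hkey : β / 2 * d ^ 2 ≤ C + K * d := by
      have h3' := abs_le.1 h3
      have h4' := abs_le.1 h4
      rw [hq_eq] at h1
      rw [h5] at h3'
      simp only [hK_def]
      nlinarith [h3'.1, h4'.2]
    have hK0 : 0 ≤ K := by positivity
    have hC0 : 0 ≤ C := abs_nonneg _
    have hsq : (β * d) ^ 2 ≤ 4 * (β * C + K ^ 2) := by
      clear_value d K C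
      nlinarith [sq_nonneg (β * d - 2 * K), mul_le_mul_of_nonneg_left hkey hβ.le]
    have hbd : β * d ≤ Real.sqrt (4 * (β * C + K ^ 2)) :=
      Real.le_sqrt_of_sq_le hsq
    have : d ≤ R := by
      rw [hR_def, le_div_iff₀ hβ]; linarith [hbd]
    simpa [mem_closedBall, dist_eq_norm, hd_def] using this
  have hS_closed : IsClosed S :=
    lowerSemicontinuous_iff_isClosed_preimage.1 hF_lsc _
  have hS_cpt : IsCompact S :=
    (isCompact_closedBall x R).of_isClosed_subset hS_closed hSball
  obtain ⟨p, hpS, hpmin⟩ := lsc_exists_min hS_cpt ⟨x, hxS⟩ hF_lsc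
  -- p is a global minimizer of F
  have hpglob : ∀ u : X, F p ≤ F u := by
    intro u
    by_cases hu : u ∈ S
    · exact hpmin u hu
    · have h1 : F p ≤ (fx : EReal) := hpS
      have h2 : ¬ F u ≤ (fx : EReal) := hu
      exact h1.trans (le_of_lt (lt_of_not_ge h2))
  have hfp_ne_top := hfin p hpS
  set fp : ℝ := (f p).toReal with hfp_def
  have hfp : f p = (fp : EReal) := (EReal.coe_toReal hfp_ne_top (hbot p)).symm
  refine ⟨p, fp, hfp, fun u => ?_⟩
  by_cases hu : f u = ⊤
  · rw [hu]; exact le_top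
  set fu : ℝ := (f u).toReal with hfu_def
  have hfu : f u = (fu : EReal) := (EReal.coe_toReal hu (hbot u)).symm
  set d : X := u - p with hd_def
  set B : ℝ := β * ⟪p - x, d⟫ - ⟪φ, d⟫ with hB_def
  set Cq : ℝ := β / 2 * ‖d‖ ^ 2 with hCq_def
  have hCq0 : 0 ≤ Cq := by positivity
  have hkey : ∀ t : ℝ, 0 < t → t ≤ 1 → fp - fu ≤ B + t * Cq := by
    intro t ht0 ht1
    have hconv := hf_conv u p t (le_of_lt ht0) ht1
    have hwpt : t • u + (1 - t) • p = p + t • d := by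
      rw [hd_def]; module
    rw [hwpt, hfu, hfp] at hconv
    have hconv' : f (p + t • d) ≤ (((t * fu + (1 - t) * fp : ℝ)) : EReal) := by
      rw [EReal.coe_add, EReal.coe_mul, EReal.coe_mul]; exact hconv
    have hFle := hpglob (p + t • d)
    have hFle2 : F (p + t • d) ≤ ((t * fu + (1 - t) * fp + q (p + t • d) : ℝ) : EReal) := by
      rw [EReal.coe_add]
      exact add_le_add hconv' le_rfl
    have hFp : F p = ((fp + q p : ℝ) : EReal) := by
      simp only [hF_def, hfp, EReal.coe_add]
    have hreal : fp + q p ≤ t * fu + (1 - t) * fp + q (p + t • d) :=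
      EReal.coe_le_coe_iff.1 (by rw [← hFp]; exact hFle.trans hFle2)
    -- expand q (p + t • d)
    have hqexp : q (p + t • d) = q p + t * (β * ⟪p - x, d⟫ - ⟪φ, d⟫) + t ^ 2 * (β / 2 * ‖d‖ ^ 2) := by
      have hvec : p + t • d - x = (p - x) + t • d := by module
      simp only [hq_def, hvec]
      rw [norm_add_sq_real, inner_add_right, real_inner_smul_right, norm_smul,
        real_inner_smul_right]
      rw [mul_pow]
      rw [Real.norm_eq_abs, sq_abs]
      ring
    rw [hqexp] at hreal
    have hmul : (fp - fu) * t ≤ (B + t * Cq) * t := by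
      simp only [hB_def, hCq_def]; nlinarith
    exact le_of_mul_le_mul_right hmul ht0
  have hlim : fp - fu ≤ B := by
    refine le_of_forall_pos_le_add (fun ε hε => ?_)
    set t : ℝ := min 1 (ε / (Cq + 1)) with ht_def
    have ht0 : 0 < t := lt_min one_pos (div_pos hε (by positivity))
    have ht1 : t ≤ 1 := min_le_left _ _
    have h := hkey t ht0 ht1
    have htCq : t * Cq ≤ ε := by
      have h1 : t ≤ ε / (Cq + 1) := min_le_right _ _
      have h2 : t * Cq ≤ (ε / (Cq + 1)) * Cq :=
        mul_le_mul_of_nonneg_right h1 hCq0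
      have h3 : (ε / (Cq + 1)) * Cq ≤ ε := by
        rw [div_mul_eq_mul_div, div_le_iff₀ (by positivity)]
        nlinarith
      linarith
    linarith
  -- conclude
  rw [hfu, ← EReal.coe_add, EReal.coe_le_coe_iff]
  have hinner : ⟪φ - β • (p - x), u - p⟫ = ⟪φ, d⟫ - β * ⟪p - x, d⟫ := by
    rw [inner_sub_left, real_inner_smul_left, hd_def]
  rw [hinner]
  simp only [hB_def] at hlim
  linarith

end Aux

/-- lower bound on the projected duality-gap term.
Assume `dom f*` is nonempty and closed.  Then for every `z = (x, y)` with `f(x) < +∞`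
(its finite value `fx` given by `hfx`), with `a = Proj_{dom f*}(−Aᵀy)` (whose conjugate
value `fa = f*(a)` is given by `hfa`) and `g` the (finite) value of the self-centered
smoothed gap, `f(x) + f*(a) + ⟪b, y⟫ ≥ −(√(2βx)‖x‖ + √(2βy)‖y‖) √g`. -/

theorem PDG_term_lower_bound
    [FiniteDimensional ℝ X] [FiniteDimensional ℝ Y]
    (f : X → EReal) (A : X →L[ℝ] Y) (At : Y →L[ℝ] X) (b : Y)
    (hf_proper : EProper f) (hf_lsc : LowerSemicontinuous f) (hf_conv : EConvexOn f)
    (hAt : ∀ (u : X) (v : Y), ⟪A u, v⟫ = ⟪u, At v⟫)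
    (βx βy : ℝ) (hβx : 0 < βx) (hβy : 0 < βy)
    (hdom_ne : (fdom f).Nonempty) (hdom_closed : IsClosed (fdom f))
    (x : X) (y : Y) (fx : ℝ) (hfx : f x = (fx : EReal))
    (a : X) (ha : IsProj (fdom f) (-(At y)) a)
    (fa : ℝ) (hfa : fenchel f a = (fa : EReal))
    (g : ℝ) (hg : smoothedGap f A b βx βy x y x y = (g : EReal)) :
    -((Real.sqrt (2 * βx) * ‖x‖ + Real.sqrt (2 * βy) * ‖y‖) * Real.sqrt g)
      ≤ fx + fa + ⟪b, y⟫ := by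
  obtain ⟨hbot, -⟩ := hf_proper
  have hterm : ∀ w : X × Y,
      Lag f A b x w.2 - Lag f A b w.1 y
        - ((βx / 2 * ‖w.1 - x‖ ^ 2 + βy / 2 * ‖w.2 - y‖ ^ 2 : ℝ) : EReal) ≤ (g : EReal) := by
    intro w
    rw [← hg, smoothedGap]
    exact le_iSup (fun w : X × Y => Lag f A b x w.2 - Lag f A b w.1 y
      - ((βx / 2 * ‖w.1 - x‖ ^ 2 + βy / 2 * ‖w.2 - y‖ ^ 2 : ℝ) : EReal)) w
  have hLagx : ∀ y' : Y, Lag f A b x y' = ((fx + ⟪A x - b, y'⟫ : ℝ) : EReal) := by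
    intro y'; rw [Lag, hfx, ← EReal.coe_add]
  -- g is nonnegative
  have hg0 : 0 ≤ g := by
    have h := hterm (x, y)
    simp only [hLagx] at h
    rw [← EReal.coe_sub, ← EReal.coe_sub, EReal.coe_le_coe_iff] at h
    simp only [sub_self, norm_zero] at h
    nlinarith [h]
  -- bound on the feasibility gap:  ‖A x − b‖² ≤ 2 βy g
  have h2βy : ‖A x - b‖ ^ 2 ≤ 2 * βy * g := by
    have h := hterm (x, y + (1 / βy) • (A x - b))
    simp only [hLagx] at h
    rw [← EReal.coe_sub, ← EReal.coe_sub, EReal.coe_le_coe_iff] at h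
    simp only [sub_self, norm_zero, add_sub_cancel_left, inner_add_right,
      real_inner_smul_right, real_inner_self_eq_norm_sq, norm_smul,
      Real.norm_eq_abs] at h
    rw [abs_of_pos (by positivity : (0:ℝ) < 1 / βy)] at h
    set t : ℝ := ‖A x - b‖ ^ 2 with ht_def
    have hh : (1 / βy) * t - βy / 2 * ((1 / βy * ‖A x - b‖) ^ 2) ≤ g := by nlinarith [h]
    have heq : (1 / βy) * t - βy / 2 * ((1 / βy * ‖A x - b‖) ^ 2) = t / (2 * βy) := by
      rw [ht_def]; field_simp; ring
    rw [heq, div_le_iff₀ (by positivity)] at hh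
    linarith
  -- affine minorant of f coming from a point of dom f*
  obtain ⟨ψ1, hψ1⟩ := hdom_ne
  have hψ1bot : fenchel f ψ1 ≠ ⊥ := by
    have h : ((⟪ψ1, x⟫ - fx : ℝ) : EReal) ≤ fenchel f ψ1 := by
      rw [fenchel]
      have h := le_iSup (fun u : X => ((⟪ψ1, u⟫ : ℝ) : EReal) - f u) x
      rwa [hfx, ← EReal.coe_sub] at h
    intro hc; rw [hc, le_bot_iff] at h; exact EReal.coe_ne_bot _ h
  set c1 : ℝ := (fenchel f ψ1).toReal with hc1_def
  have hc1 : fenchel f ψ1 = (c1 : EReal) := (EReal.coe_toReal hψ1 hψ1bot).symm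
  have hmin : ∀ u : X, ((⟪ψ1, u⟫ - c1 : ℝ) : EReal) ≤ f u := by
    intro u
    by_cases hu : f u = ⊤
    · rw [hu]; exact le_top
    · have hfu : f u = ((f u).toReal : EReal) := (EReal.coe_toReal hu (hbot u)).symm
      have h := le_iSup (fun u : X => ((⟪ψ1, u⟫ : ℝ) : EReal) - f u) u
      rw [← fenchel, hc1, hfu, ← EReal.coe_sub, EReal.coe_le_coe_iff] at h
      rw [hfu, EReal.coe_le_coe_iff]
      linarith
  -- the prox point and its subgradient
  set φ : X := -(At y) with hφ_def
  obtain ⟨p, fp, hfp, hsub⟩ := exists_prox_subgrad f hbot hf_lsc hf_conv βx hβx φ x fx hfx ψ1 c1 hmin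
  set ψ0 : X := φ - βx • (p - x) with hψ0_def
  -- ψ0 ∈ dom f*
  have hψ0dom : ψ0 ∈ fdom f := by
    have hle : fenchel f ψ0 ≤ ((⟪ψ0, p⟫ - fp : ℝ) : EReal) := by
      rw [fenchel]
      apply iSup_le
      intro u
      by_cases hu : f u = ⊤
      · rw [hu]; simp
      · have hfu : f u = ((f u).toReal : EReal) := (EReal.coe_toReal hu (hbot u)).symm
        set fu : ℝ := (f u).toReal
        have h := hsub u
        rw [hfu, ← EReal.coe_add, EReal.coe_le_coe_iff] at h
        rw [hfu, ← EReal.coe_sub, EReal.coe_le_coe_iff]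
        have hir : ⟪ψ0, u - p⟫ = ⟪ψ0, u⟫ - ⟪ψ0, p⟫ := inner_sub_right _ _ _
        rw [hir] at h
        linarith
    intro hc; rw [hc, top_le_iff] at hle; exact EReal.coe_ne_top _ hle
  -- the projection inequality
  have hproj : ‖a - φ‖ ≤ βx * ‖p - x‖ := by
    have h := ha.2 ψ0 hψ0dom
    have : ψ0 - φ = -(βx • (p - x)) := by rw [hψ0_def]; abel
    rw [this, norm_neg, norm_smul, Real.norm_eq_abs, abs_of_pos hβx] at h
    exact h
  -- the smoothed gap controls ‖p − x‖²
  have hgap : βx / 2 * ‖p - x‖ ^ 2 ≤ g := by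
    have h := hterm (p, y)
    rw [hLagx] at h
    have hLagp : Lag f A b p y = ((fp + ⟪A p - b, y⟫ : ℝ) : EReal) := by
      rw [Lag, hfp, ← EReal.coe_add]
    rw [hLagp, ← EReal.coe_sub, ← EReal.coe_sub, EReal.coe_le_coe_iff] at h
    simp only [sub_self, norm_zero] at h
    have hsubx := hsub x
    rw [hfx, ← EReal.coe_add, EReal.coe_le_coe_iff] at hsubx
    have hi1 : ⟪A x - b, y⟫ - ⟪A p - b, y⟫ = -⟪x - p, φ⟫ := by
      rw [hφ_def]
      have : ⟪A x - b, y⟫ - ⟪A p - b, y⟫ = ⟪A (x - p), y⟫ := by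
        rw [map_sub, inner_sub_left, inner_sub_left, inner_sub_left]; ring
      rw [this, hAt, inner_neg_right]
      ring_nf
    have hi2 : ⟪ψ0, x - p⟫ = ⟪φ, x - p⟫ + βx * ‖p - x‖ ^ 2 := by
      rw [hψ0_def, inner_sub_left, real_inner_smul_left]
      have : (x - p : X) = -(p - x) := by abel
      rw [this]
      simp only [inner_neg_right, real_inner_self_eq_norm_sq]
      ring
    have hi3 : ⟪x - p, φ⟫ = ⟪φ, x - p⟫ := real_inner_comm _ _
    rw [hi2] at hsubx
    nlinarith [h, hsubx]
  -- distance bound:  ‖a + Aᵀy‖² ≤ 2 βx g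
  have h2βx : ‖a + At y‖ ^ 2 ≤ 2 * βx * g := by
    have h1 : ‖a + At y‖ = ‖a - φ‖ := by rw [hφ_def, sub_neg_eq_add]
    rw [h1]
    have h2 : ‖a - φ‖ ^ 2 ≤ (βx * ‖p - x‖) ^ 2 :=
      pow_le_pow_left₀ (norm_nonneg _) hproj 2
    nlinarith [hgap, hβx]
  -- the Fenchel–Young inequality at a, x
  have hfy : ⟪a, x⟫ - fx ≤ fa := by
    have h := le_iSup (fun u : X => ((⟪a, u⟫ : ℝ) : EReal) - f u) x
    rw [← fenchel, hfa, hfx, ← EReal.coe_sub, EReal.coe_le_coe_iff] at h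
    exact h
  -- norm bounds via square roots
  have hn1 : ‖a + At y‖ ≤ Real.sqrt (2 * βx) * Real.sqrt g := by
    rw [← Real.sqrt_mul (by positivity) g]
    exact Real.le_sqrt_of_sq_le (by linarith [h2βx])
  have hn2 : ‖A x - b‖ ≤ Real.sqrt (2 * βy) * Real.sqrt g := by
    rw [← Real.sqrt_mul (by positivity) g]
    exact Real.le_sqrt_of_sq_le (by linarith [h2βy])
  -- final assembly
  have hi4 : ⟪a, x⟫ + ⟪b, y⟫ = ⟪a + At y, x⟫ - ⟪A x - b, y⟫ := by
    rw [inner_add_left, inner_sub_left]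
    have : ⟪At y, x⟫ = ⟪A x, y⟫ := by rw [real_inner_comm, ← hAt]
    rw [this]; ring
  have hcs1 : -(‖a + At y‖ * ‖x‖) ≤ ⟪a + At y, x⟫ := by
    have := abs_real_inner_le_norm (a + At y) x
    cases' abs_le.1 this with h1 h2
    linarith
  have hcs2 : ⟪A x - b, y⟫ ≤ ‖A x - b‖ * ‖y‖ := by
    have := abs_real_inner_le_norm (A x - b) y
    cases' abs_le.1 this with h1 h2
    linarith
  have hm1 : ‖a + At y‖ * ‖x‖ ≤ Real.sqrt (2 * βx) * Real.sqrt g * ‖x‖ :=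
    mul_le_mul_of_nonneg_right hn1 (norm_nonneg _)
  have hm2 : ‖A x - b‖ * ‖y‖ ≤ Real.sqrt (2 * βy) * Real.sqrt g * ‖y‖ :=
    mul_le_mul_of_nonneg_right hn2 (norm_nonneg _)
  nlinarith [hfy, hi4, hcs1, hcs2, hm1, hm2]
end
end

section
/- Let β = (βx, βy) ∈ (0,∞)², z = (x,y) ∈ X × Y with f(x) < +∞, let p = Prox_{βx⁻¹ f}(x − βx⁻¹ Aᵀ y), and set ã = βx(x − p) − Aᵀy (so that ã ∈ ∂f(p)). Then f(x) + f*(ã) − ⟨x, ã⟩ ≤ G_β(z). -/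
open scoped RealInnerProductSpace
open Filter Topology Metric

noncomputable section

variable {X Y : Type*} [NormedAddCommGroup X] [InnerProductSpace ℝ X]
  [NormedAddCommGroup Y] [InnerProductSpace ℝ Y]

/-- approximate duality-gap upper bound via the smoothed gap.
Let `p = Prox_{βx⁻¹ f}(x − βx⁻¹ Aᵀy)` and `ã = βx(x − p) − Aᵀy` (so that `ã ∈ ∂f(p)`).
Then `f(x) + f*(ã) − ⟪x, ã⟫ ≤ G_β(z)`. -/
theorem fenchel_gap_le_smoothedGap
    [FiniteDimensional ℝ X] [FiniteDimensional ℝ Y]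
    (f : X → EReal) (A : X →L[ℝ] Y) (At : Y →L[ℝ] X) (b : Y)
    (hf_proper : EProper f) (hf_lsc : LowerSemicontinuous f) (hf_conv : EConvexOn f)
    (hAt : ∀ (u : X) (v : Y), ⟪A u, v⟫ = ⟪u, At v⟫)
    (βx βy : ℝ) (hβx : 0 < βx) (hβy : 0 < βy)
    (x : X) (y : Y) (hfx : f x < ⊤)
    (p : X) (hp : IsProx f βx⁻¹ (x - βx⁻¹ • At y) p) :
    f x + fenchel f (βx • (x - p) - At y)
        - ((⟪x, βx • (x - p) - At y⟫ : ℝ) : EReal)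
      ≤ smoothedGap f A b βx βy x y x y := by
  obtain ⟨hbot, -⟩ := hf_proper
  set v : X := x - βx⁻¹ • At y with hv
  set a : X := βx • (x - p) - At y with ha
  have hs : 1 / (2 * βx⁻¹) = βx / 2 := by field_simp
  -- f p ≠ ⊤
  have hfp_ne_top : f p ≠ ⊤ := by
    intro h
    have := hp x
    rw [h, EReal.top_add_coe, top_le_iff] at this
    have hxt : f x + ((1 / (2 * βx⁻¹) * ‖x - v‖ ^ 2 : ℝ) : EReal) ≠ ⊤ :=
      (EReal.add_lt_top hfx.ne (EReal.coe_ne_top _)).ne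
    exact hxt this
  set fp : ℝ := (f p).toReal with hfp
  have hfpe : f p = (fp : EReal) := (EReal.coe_toReal hfp_ne_top (hbot p)).symm
  set fx : ℝ := (f x).toReal with hfxr
  have hfxe : f x = (fx : EReal) := (EReal.coe_toReal hfx.ne (hbot x)).symm
  -- subgradient inequality: ∀ u, fp + ⟪a, u - p⟫ ≤ f u
  have hsub : ∀ u : X, ((fp + ⟪a, u - p⟫ : ℝ) : EReal) ≤ f u := by
    intro u
    rcases eq_or_ne (f u) ⊤ with h | h
    · rw [h]; exact le_top
    set fu : ℝ := (f u).toReal with hfur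
    have hfue : f u = (fu : EReal) := (EReal.coe_toReal h (hbot u)).symm
    rw [hfue, EReal.coe_le_coe_iff]
    -- for each t ∈ (0,1]
    have key : ∀ t : ℝ, 0 < t → t ≤ 1 →
        fp + ⟪a, u - p⟫ ≤ fu + t * (βx / 2 * ‖u - p‖ ^ 2) := by
      intro t ht0 ht1
      have h1 := hp (t • u + (1 - t) • p)
      have h2 := hf_conv u p t ht0.le ht1
      rw [hfue, hfpe, ← EReal.coe_mul, ← EReal.coe_mul, ← EReal.coe_add] at h2
      have h3 : f (t • u + (1 - t) • p) ≠ ⊥ := hbot _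
      have h4 : f (t • u + (1 - t) • p) ≠ ⊤ := by
        intro hh; rw [hh] at h2; exact EReal.coe_ne_top _ (top_le_iff.mp h2)
      set fm : ℝ := (f (t • u + (1 - t) • p)).toReal with hfm
      have hfme : f (t • u + (1 - t) • p) = (fm : EReal) := (EReal.coe_toReal h4 h3).symm
      rw [hfme, EReal.coe_le_coe_iff] at h2
      rw [hfme, hfpe, ← EReal.coe_add, ← EReal.coe_add, EReal.coe_le_coe_iff, hs] at h1
      -- h1 : fp + βx/2 ‖p - v‖² ≤ fm + βx/2 ‖t•u + (1-t)•p - v‖²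
      -- h2 : fm ≤ t * fu + (1 - t) * fp
      have hexp : t • u + (1 - t) • p - v = (p - v) + t • (u - p) := by
        module
      have hnorm : ‖t • u + (1 - t) • p - v‖ ^ 2
          = ‖p - v‖ ^ 2 + 2 * t * ⟪p - v, u - p⟫ + t ^ 2 * ‖u - p‖ ^ 2 := by
        rw [hexp, ← real_inner_self_eq_norm_sq, ← real_inner_self_eq_norm_sq,
          ← real_inner_self_eq_norm_sq]
        simp only [inner_add_left, inner_add_right, real_inner_smul_left,
          real_inner_smul_right, real_inner_comm (p - v) (u - p)]
        ring
      have hav : ⟪a, u - p⟫ = βx * ⟪v - p, u - p⟫ := by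
        have hva : a = βx • (v - p) := by
          rw [ha, hv]
          match_scalars <;> field_simp
        rw [hva, real_inner_smul_left]
      rw [hnorm] at h1
      have hinner : ⟪v - p, u - p⟫ = -⟪p - v, u - p⟫ := by
        rw [← neg_sub p v, inner_neg_left]
      rw [hav, hinner]
      nlinarith [h1, h2, sq_nonneg t, ht0]
    -- take t → 0
    by_contra hcon
    push_neg at hcon
    set C : ℝ := βx / 2 * ‖u - p‖ ^ 2 with hC
    have hC0 : 0 ≤ C := by positivity
    set ε : ℝ := (fp + ⟪a, u - p⟫ - fu) / 2 with hε
    have hε0 : 0 < ε := by rw [hε]; linarith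
    have := key (min 1 (ε / (C + 1))) (lt_min one_pos (by positivity)) (min_le_left _ _)
    have htC : min 1 (ε / (C + 1)) * C ≤ ε := by
      calc min 1 (ε / (C + 1)) * C ≤ (ε / (C + 1)) * C := by
            apply mul_le_mul_of_nonneg_right (min_le_right _ _) hC0
        _ ≤ ε := by
            rw [div_mul_eq_mul_div, div_le_iff₀ (by linarith)]
            nlinarith
    linarith
  -- fenchel bound
  have hfen : fenchel f a ≤ ((⟪a, p⟫ - fp : ℝ) : EReal) := by
    apply iSup_le
    intro u
    rcases eq_or_ne (f u) ⊤ with h | h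
    · rw [h]
      simp
    have hfue : f u = (((f u).toReal : ℝ) : EReal) := (EReal.coe_toReal h (hbot u)).symm
    have := hsub u
    rw [hfue, EReal.coe_le_coe_iff] at this
    rw [hfue, ← EReal.coe_sub, EReal.coe_le_coe_iff]
    have : ⟪a, u - p⟫ = ⟪a, u⟫ - ⟪a, p⟫ := inner_sub_right a u p
    have h2 := hsub u
    rw [hfue, EReal.coe_le_coe_iff] at h2
    rw [this] at h2
    linarith
  -- lower bound the sup at w = (p, y)
  have hG : (Lag f A b x y - Lag f A b p y
        - ((βx / 2 * ‖p - x‖ ^ 2 + βy / 2 * ‖y - y‖ ^ 2 : ℝ) : EReal))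
      ≤ smoothedGap f A b βx βy x y x y := le_iSup (fun w : X × Y =>
        Lag f A b x w.2 - Lag f A b w.1 y
          - ((βx / 2 * ‖w.1 - x‖ ^ 2 + βy / 2 * ‖w.2 - y‖ ^ 2 : ℝ) : EReal)) (p, y)
  refine le_trans ?_ hG
  have hLx : Lag f A b x y = ((fx + ⟪A x - b, y⟫ : ℝ) : EReal) := by
    rw [Lag, hfxe, ← EReal.coe_add]
  have hLp : Lag f A b p y = ((fp + ⟪A p - b, y⟫ : ℝ) : EReal) := by
    rw [Lag, hfpe, ← EReal.coe_add]
  rw [hLx, hLp, ← EReal.coe_sub, ← EReal.coe_sub]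
  calc f x + fenchel f a - ((⟪x, a⟫ : ℝ) : EReal)
      ≤ ((fx : EReal) + ((⟪a, p⟫ - fp : ℝ) : EReal)) - ((⟪x, a⟫ : ℝ) : EReal) := by
        apply EReal.sub_le_sub _ le_rfl
        rw [hfxe]
        exact add_le_add le_rfl hfen
    _ = ((fx + (⟪a, p⟫ - fp) - ⟪x, a⟫ : ℝ) : EReal) := by
        rw [← EReal.coe_add, ← EReal.coe_sub]
    _ ≤ ((fx + ⟪A x - b, y⟫ - (fp + ⟪A p - b, y⟫) - (βx / 2 * ‖p - x‖ ^ 2 + βy / 2 * ‖y - y‖ ^ 2) : ℝ) : EReal) := by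
        rw [EReal.coe_le_coe_iff]
        have hAy : ⟪A x - b, y⟫ - ⟪A p - b, y⟫ = ⟪x - p, At y⟫ := by
          rw [← hAt]
          simp only [inner_sub_left, map_sub]
          ring
        have hap : ⟪a, p⟫ - ⟪x, a⟫ = -(βx * ‖x - p‖ ^ 2) + ⟪x - p, At y⟫ := by
          have e1 : (⟪x, a⟫:ℝ) = ⟪a, x⟫ := real_inner_comm a x
          have e2 : (⟪a, p⟫:ℝ) - ⟪a, x⟫ = ⟪a, p - x⟫ := (inner_sub_right a p x).symm
          have e3 : (⟪a, p - x⟫:ℝ) = βx * ⟪x - p, p - x⟫ - ⟪At y, p - x⟫ := by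
            rw [ha]; simp [inner_sub_left, real_inner_smul_left]
          have e4 : (⟪x - p, p - x⟫:ℝ) = -‖x - p‖ ^ 2 := by
            have hpx : p - x = -(x - p) := by abel
            rw [hpx, inner_neg_right, real_inner_self_eq_norm_sq]
          have e5 : (⟪At y, p - x⟫:ℝ) = -⟪x - p, At y⟫ := by
            have hpx : p - x = -(x - p) := by abel
            rw [hpx, inner_neg_right, real_inner_comm]
          rw [e1, e2, e3, e4, e5]; ring
        have hnn : ‖p - x‖ = ‖x - p‖ := norm_sub_rev p x
        simp only [sub_self, norm_zero]
        rw [hnn]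
        nlinarith [sq_nonneg ‖x - p‖, hAy, hap, hβx]
  done
end
end
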